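/- arXiv:2206.04938 — 2 statements merged into one kernel-verified Lean document; each statement's English description precedes it below -/
import Mathlib

section
/- Let L₊ = D + 1 − 3Q² and L₋ = D + 1 − Q², where Q is the ground state solving DQ + Q = Q³. Suppose S₁ solves L₋S₁ = ΛQ and T₂ solves L₊T₂ = (1/2)S₁ − ΛS₁ + S₁²Q. Assume the identities L₊(ΛQ) = −Q, [D,Λ] = D, ([Q²,Λ]f = −2xQ'Q f), and the pointwise identity −(xQ')Q + QΛQ = (1/2)Q². Then (S₁, S₁) + 2(Q, T₂) = 0. -/
open MeasureTheory ComplexConjugate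

/-- Fourier multiplier operator with symbol `m`, using the convention
`𝓕u(ξ) = ∫ e^{-iξy} u(y) dy`, `u(x) = (1/2π) ∫ e^{iξx} 𝓕u(ξ) dξ`. -/
noncomputable def fourierMult (m : ℝ → ℂ) (u : ℝ → ℂ) : ℝ → ℂ :=
  fun x => (1 / (2 * (Real.pi : ℂ))) *
    ∫ ξ : ℝ, m ξ * (∫ y : ℝ, Complex.exp (-Complex.I * (ξ : ℂ) * (y : ℂ)) * u y) *
      Complex.exp (Complex.I * (ξ : ℂ) * (x : ℂ))

/-- The half-wave operator `D = |∇|`, Fourier multiplier with symbol `|ξ|`. -/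
noncomputable def Dop : (ℝ → ℂ) → (ℝ → ℂ) :=
  fourierMult (fun ξ => ((|ξ| : ℝ) : ℂ))

/-- The scaling generator `Λf = (1/2)f + x f'`. -/
noncomputable def lam (f : ℝ → ℂ) : ℝ → ℂ :=
  fun x => (1/2 : ℂ) * f x + (x : ℂ) * deriv f x

/-! ### Auxiliary Schwartz-space constructions -/

open SchwartzMap Function Filter

lemma SchwartzMap.hasTemperateGrowth' (g : SchwartzMap ℝ ℂ) :
    Function.HasTemperateGrowth (⇑g) := by
  refine ⟨g.smooth', fun n => ?_⟩
  obtain ⟨C, hC0, hC⟩ := g.decay 0 n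
  exact ⟨0, C, fun x => by simpa using hC x⟩

noncomputable def mulS (f g : SchwartzMap ℝ ℂ) : SchwartzMap ℝ ℂ :=
  SchwartzMap.bilinLeftCLM (ContinuousLinearMap.mul ℝ ℂ) g.hasTemperateGrowth' f

lemma mulS_apply (f g : SchwartzMap ℝ ℂ) (x : ℝ) : mulS f g x = f x * g x := rfl

noncomputable def mulX (f : SchwartzMap ℝ ℂ) : SchwartzMap ℝ ℂ :=
  SchwartzMap.bilinLeftCLM (ContinuousLinearMap.mul ℝ ℂ)
    (Complex.ofRealCLM.hasTemperateGrowth) f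

lemma mulX_apply (f : SchwartzMap ℝ ℂ) (x : ℝ) : mulX f x = f x * (x : ℂ) := rfl

noncomputable def lamS (f : SchwartzMap ℝ ℂ) : SchwartzMap ℝ ℂ :=
  (1/2 : ℂ) • f + mulX (SchwartzMap.derivCLM ℝ ℂ f)

lemma lamS_apply (f : SchwartzMap ℝ ℂ) (x : ℝ) : lamS f x = lam (⇑f) x := by
  simp only [lamS, SchwartzMap.add_apply, SchwartzMap.smul_apply, mulX_apply,
    SchwartzMap.derivCLM_apply, lam, smul_eq_mul]
  ring

lemma smul_int (f g : SchwartzMap ℝ ℂ) : Integrable (fun x => f x * g x) := by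
  have := (mulS f g).integrable (μ := volume)
  exact this.congr (by filter_upwards with x; rw [mulS_apply])

lemma int4 (u v w z : SchwartzMap ℝ ℂ) :
    Integrable (fun x => u x * v x * w x * z x) := by
  have := smul_int (mulS (mulS u v) w) z
  exact this.congr (by filter_upwards with x; simp [mulS_apply])

lemma schwartz_tendsto_atTop (f : SchwartzMap ℝ ℂ) : Tendsto (⇑f) atTop (nhds 0) := by
  have h := zero_at_infty (f : SchwartzMap ℝ ℂ)
  rw [cocompact_eq_atBot_atTop] at h
  exact h.mono_left le_sup_right

lemma schwartz_tendsto_atBot (f : SchwartzMap ℝ ℂ) : Tendsto (⇑f) atBot (nhds 0) := by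
  have h := zero_at_infty (f : SchwartzMap ℝ ℂ)
  rw [cocompact_eq_atBot_atTop] at h
  exact h.mono_left le_sup_left

/-! ### Antisymmetry of `Λ` -/

lemma lam_antisym (f g : SchwartzMap ℝ ℂ) :
    (∫ x : ℝ, lam (⇑f) x * g x) = - ∫ x : ℝ, f x * lam (⇑g) x := by
  set H : SchwartzMap ℝ ℂ := mulX (mulS f g) with hH
  set d : ℝ → ℂ := fun x =>
    (deriv (⇑f) x * g x + f x * deriv (⇑g) x) * (x : ℂ) + f x * g x * 1 with hd
  have hderiv : ∀ x : ℝ, HasDerivAt (⇑H) (d x) x := by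
    intro x
    have hfx : HasDerivAt (⇑f) (deriv (⇑f) x) x := f.differentiableAt.hasDerivAt
    have hgx : HasDerivAt (⇑g) (deriv (⇑g) x) x := g.differentiableAt.hasDerivAt
    have hx : HasDerivAt (fun y : ℝ => (y : ℂ)) 1 x := by
      simpa using (hasDerivAt_id x).ofReal_comp
    have := (hfx.mul hgx).mul hx
    convert this using 2 <;> rfl
  have hdint : Integrable d := by
    have := ((mulX (mulS (SchwartzMap.derivCLM ℝ ℂ f) g)
      + mulX (mulS f (SchwartzMap.derivCLM ℝ ℂ g))) + mulS f g).integrable (μ := volume)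
    refine this.congr ?_
    filter_upwards with x
    simp only [SchwartzMap.add_apply, mulX_apply, mulS_apply, SchwartzMap.derivCLM_apply, hd]
    ring
  have hzero : ∫ x : ℝ, d x = 0 := by
    have h1 : ∫ x in Set.Ioi (0:ℝ), d x = 0 - H 0 :=
      integral_Ioi_of_hasDerivAt_of_tendsto' (fun x _ => hderiv x)
        hdint.integrableOn (schwartz_tendsto_atTop H)
    have h2 : ∫ x in Set.Iic (0:ℝ), d x = H 0 - 0 :=
      integral_Iic_of_hasDerivAt_of_tendsto' (fun x _ => hderiv x)
        hdint.integrableOn (schwartz_tendsto_atBot H)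
    have h3 := intervalIntegral.integral_Iic_add_Ioi (b := (0:ℝ))
      hdint.integrableOn hdint.integrableOn
    rw [h1, h2] at h3
    rw [← h3]; ring
  have hint1 : Integrable (fun x => lam (⇑f) x * g x) := by
    have := smul_int (lamS f) g
    exact this.congr (by filter_upwards with x; rw [lamS_apply])
  have hint2 : Integrable (fun x => f x * lam (⇑g) x) := by
    have := smul_int f (lamS g)
    exact this.congr (by filter_upwards with x; rw [lamS_apply])
  have hsum : (∫ x : ℝ, lam (⇑f) x * g x) + ∫ x : ℝ, f x * lam (⇑g) x = ∫ x : ℝ, d x := by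
    rw [← integral_add hint1 hint2]
    apply integral_congr_ae
    filter_upwards with x
    simp only [lam, hd]
    ring
  rw [hzero] at hsum
  linear_combination hsum

/-! ### Self-adjointness of `Dop` -/

noncomputable def Fk (f : ℝ → ℂ) (ξ : ℝ) : ℂ :=
  ∫ y : ℝ, Complex.exp (-Complex.I * ξ * y) * f y

lemma Dop_eq (u : ℝ → ℂ) (x : ℝ) :
    Dop u x = (1 / (2 * (Real.pi : ℂ))) *
      ∫ ξ : ℝ, ((|ξ| : ℝ) : ℂ) * Fk u ξ * Complex.exp (Complex.I * ξ * x) := rfl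

lemma norm_exp_I_mul (ξ x : ℝ) : ‖Complex.exp (Complex.I * ξ * x)‖ = 1 := by
  rw [Complex.norm_exp]
  simp [Complex.mul_re, Complex.mul_im]

lemma Fk_neg (g : ℝ → ℂ) (ξ : ℝ) :
    Fk g (-ξ) = ∫ y : ℝ, Complex.exp (Complex.I * ξ * y) * g y := by
  unfold Fk
  congr 1; ext y; push_cast; ring_nf

open FourierTransform Real in
lemma Fk_eq (f : ℝ → ℂ) (ξ : ℝ) : Fk f ξ = 𝓕 f (ξ / (2 * π)) := by
  rw [Real.fourier_real_eq_integral_exp_smul, Fk]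
  congr 1
  ext y
  rw [smul_eq_mul]
  congr 1
  have hπ : (π : ℝ) ≠ 0 := Real.pi_ne_zero
  have : -2 * π * y * (ξ / (2 * π)) = -(ξ * y) := by field_simp
  rw [this]
  push_cast
  ring

open FourierTransform Real in
lemma Fk_schwartz_eq (f : SchwartzMap ℝ ℂ) (ξ : ℝ) :
    Fk (⇑f) ξ = (SchwartzMap.fourierTransformCLM ℂ f) (ξ / (2 * π)) := by
  rw [Fk_eq, SchwartzMap.fourierTransformCLM_apply, SchwartzMap.fourier_coe]

lemma Fk_continuous (f : SchwartzMap ℝ ℂ) : Continuous (Fk (⇑f)) := by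
  have : Fk (⇑f) = fun ξ => (SchwartzMap.fourierTransformCLM ℂ f) (ξ / (2 * Real.pi)) := by
    ext ξ; exact Fk_schwartz_eq f ξ
  rw [this]
  exact (SchwartzMap.fourierTransformCLM ℂ f).continuous.comp (continuous_id.div_const _)

lemma Fk_norm_mul_integrable (f : SchwartzMap ℝ ℂ) :
    Integrable (fun ξ : ℝ => ‖ξ‖ * ‖Fk (⇑f) ξ‖) := by
  set g := SchwartzMap.fourierTransformCLM ℂ f with hg
  have h1 : Integrable (fun x : ℝ => ‖x‖ ^ 1 * ‖g x‖) := g.integrable_pow_mul volume 1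
  have h2 : Integrable (fun ξ : ℝ => ‖ξ / (2 * Real.pi)‖ ^ 1 * ‖g (ξ / (2 * Real.pi))‖) :=
    h1.comp_div (by positivity)
  have h3 := h2.const_mul (2 * Real.pi)
  apply h3.congr
  filter_upwards with ξ
  rw [Fk_schwartz_eq]
  rw [pow_one, norm_div]
  have hπ : (0:ℝ) < 2 * Real.pi := by positivity
  rw [Real.norm_eq_abs (2 * Real.pi), abs_of_pos hπ, ← mul_assoc,
    mul_comm (2 * Real.pi) (‖ξ‖ / (2 * Real.pi)), div_mul_cancel₀ _ hπ.ne']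

lemma Dpair (f g : ℝ → ℂ) (hgi : Integrable g)
    (hfc : Continuous (Fk f)) (hfi : Integrable (fun ξ : ℝ => ‖ξ‖ * ‖Fk f ξ‖)) :
    ∫ x : ℝ, Dop f x * g x
      = (1 / (2 * (Real.pi : ℂ))) * ∫ ξ : ℝ, ((|ξ| : ℝ) : ℂ) * Fk f ξ * Fk g (-ξ) := by
  set c : ℂ := 1 / (2 * (Real.pi : ℂ)) with hc
  set M : ℝ → ℂ := fun ξ => ((|ξ| : ℝ) : ℂ) * Fk f ξ with hM
  have hMcont : Continuous M := (Complex.continuous_ofReal.comp continuous_abs).mul hfc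
  have key : Integrable (Function.uncurry fun (x ξ : ℝ) =>
      M ξ * Complex.exp (Complex.I * ξ * x) * g x) (volume.prod volume) := by
    have hmeas : AEStronglyMeasurable (Function.uncurry fun (x ξ : ℝ) =>
        M ξ * Complex.exp (Complex.I * ξ * x) * g x) (volume.prod volume) := by
      apply AEStronglyMeasurable.mul
      · apply Continuous.aestronglyMeasurable
        exact (hMcont.comp continuous_snd).mul
          (Complex.continuous_exp.comp (((continuous_const.mul
            (Complex.continuous_ofReal.comp continuous_snd)).mul
            (Complex.continuous_ofReal.comp continuous_fst))))
      · exact (hgi.1.comp_quasiMeasurePreserving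
          (MeasureTheory.Measure.quasiMeasurePreserving_fst))
    have hbnd : Integrable (fun z : ℝ × ℝ => ‖g z.1‖ * (‖z.2‖ * ‖Fk f z.2‖))
        (volume.prod volume) := hgi.norm.mul_prod hfi
    refine hbnd.mono' hmeas ?_
    filter_upwards with z
    rw [Function.uncurry]
    simp only [norm_mul, norm_exp_I_mul, mul_one]
    have : ‖M z.2‖ = ‖z.2‖ * ‖Fk f z.2‖ := by
      simp [hM, norm_mul, Complex.norm_real, Real.norm_eq_abs, abs_abs]
    rw [this]
    rw [mul_comm (‖z.2‖ * ‖Fk f z.2‖) _]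
  calc ∫ x : ℝ, Dop f x * g x
      = ∫ x : ℝ, c * ∫ ξ : ℝ, M ξ * Complex.exp (Complex.I * ξ * x) * g x := by
        apply integral_congr_ae
        filter_upwards with x
        rw [Dop_eq, mul_assoc]
        congr 1
        exact (integral_mul_const _ _).symm
    _ = c * ∫ x : ℝ, ∫ ξ : ℝ, M ξ * Complex.exp (Complex.I * ξ * x) * g x :=
        integral_const_mul _ _
    _ = c * ∫ ξ : ℝ, ∫ x : ℝ, M ξ * Complex.exp (Complex.I * ξ * x) * g x := by
        rw [integral_integral_swap key]
    _ = c * ∫ ξ : ℝ, M ξ * Fk g (-ξ) := by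
        congr 1
        apply integral_congr_ae
        filter_upwards with ξ
        rw [Fk_neg, ← integral_const_mul]
        apply integral_congr_ae
        filter_upwards with x
        ring

lemma Dself (f g : ℝ → ℂ) (hfi : Integrable f) (hgi : Integrable g)
    (hfc : Continuous (Fk f)) (hgc : Continuous (Fk g))
    (hfi2 : Integrable (fun ξ : ℝ => ‖ξ‖ * ‖Fk f ξ‖))
    (hgi2 : Integrable (fun ξ : ℝ => ‖ξ‖ * ‖Fk g ξ‖)) :
    ∫ x : ℝ, Dop f x * g x = ∫ x : ℝ, f x * Dop g x := by
  rw [Dpair f g hgi hfc hfi2]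
  have h2 : ∫ x : ℝ, f x * Dop g x = ∫ x : ℝ, Dop g x * f x := by
    apply integral_congr_ae; filter_upwards with x; ring
  rw [h2, Dpair g f hfi hgc hgi2]
  congr 1
  rw [← integral_neg_eq_self (fun ξ : ℝ => ((|ξ| : ℝ) : ℂ) * Fk g ξ * Fk f (-ξ)) volume]
  apply integral_congr_ae; filter_upwards with ξ
  simp only [abs_neg, neg_neg]
  ring

lemma DselfS (f g : SchwartzMap ℝ ℂ) :
    ∫ x : ℝ, Dop (⇑f) x * g x = ∫ x : ℝ, f x * Dop (⇑g) x :=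
  Dself (⇑f) (⇑g) f.integrable g.integrable (Fk_continuous f) (Fk_continuous g)
    (Fk_norm_mul_integrable f) (Fk_norm_mul_integrable g)

/-! ### Splitting helpers -/

lemma intcg {f g : ℝ → ℂ} (h : ∀ x, f x = g x) : ∫ x : ℝ, f x = ∫ x : ℝ, g x := by
  congr 1; ext x; exact h x

lemma int_add3 (f g h : ℝ → ℂ) (hf : Integrable f) (hg : Integrable g) (hh : Integrable h) :
    ∫ x : ℝ, (f x + g x + h x) = (∫ x : ℝ, f x) + (∫ x : ℝ, g x) + ∫ x : ℝ, h x := by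
  have h12 : Integrable (fun x => f x + g x) volume := hf.add hg
  rw [integral_add h12 hh, integral_add hf hg]

lemma int_add5 (f₁ f₂ f₃ f₄ f₅ : ℝ → ℂ) (h₁ : Integrable f₁) (h₂ : Integrable f₂)
    (h₃ : Integrable f₃) (h₄ : Integrable f₄) (h₅ : Integrable f₅) :
    ∫ x : ℝ, (f₁ x + f₂ x + f₃ x + f₄ x + f₅ x)
      = (∫ x : ℝ, f₁ x) + (∫ x : ℝ, f₂ x) + (∫ x : ℝ, f₃ x) + (∫ x : ℝ, f₄ x)
        + ∫ x : ℝ, f₅ x := by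
  have g2 : Integrable (fun x => f₁ x + f₂ x) volume := h₁.add h₂
  have g3 : Integrable (fun x => f₁ x + f₂ x + f₃ x) volume := g2.add h₃
  have g4 : Integrable (fun x => f₁ x + f₂ x + f₃ x + f₄ x) volume := g3.add h₄
  rw [integral_add g4 h₅, integral_add g3 h₄, integral_add g2 h₃, integral_add h₁ h₂]

lemma int_add7 (f₁ f₂ f₃ f₄ f₅ f₆ f₇ : ℝ → ℂ) (h₁ : Integrable f₁) (h₂ : Integrable f₂)
    (h₃ : Integrable f₃) (h₄ : Integrable f₄) (h₅ : Integrable f₅) (h₆ : Integrable f₆)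
    (h₇ : Integrable f₇) :
    ∫ x : ℝ, (f₁ x + f₂ x + f₃ x + f₄ x + f₅ x + f₆ x + f₇ x)
      = (∫ x : ℝ, f₁ x) + (∫ x : ℝ, f₂ x) + (∫ x : ℝ, f₃ x) + (∫ x : ℝ, f₄ x)
        + (∫ x : ℝ, f₅ x) + (∫ x : ℝ, f₆ x) + ∫ x : ℝ, f₇ x := by
  have g2 : Integrable (fun x => f₁ x + f₂ x) volume := h₁.add h₂
  have g3 : Integrable (fun x => f₁ x + f₂ x + f₃ x) volume := g2.add h₃
  have g4 : Integrable (fun x => f₁ x + f₂ x + f₃ x + f₄ x) volume := g3.add h₄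
  have g5 : Integrable (fun x => f₁ x + f₂ x + f₃ x + f₄ x + f₅ x) volume := g4.add h₅
  have g6 : Integrable (fun x => f₁ x + f₂ x + f₃ x + f₄ x + f₅ x + f₆ x) volume := g5.add h₆
  rw [integral_add g6 h₇, integral_add g5 h₆, integral_add g4 h₅, integral_add g3 h₄,
    integral_add g2 h₃, integral_add h₁ h₂]

/-- Key algebraic relation `(S₁, S₁) + 2(Q, T₂) = 0` for the blowup profile:
`Q` the ground state of `DQ + Q = Q³`, `L₋S₁ = ΛQ`,
`L₊T₂ = (1/2)S₁ - ΛS₁ + S₁²Q`, assuming `L₊(ΛQ) = -Q`, `[D,Λ] = D`,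
`[Q²,Λ]f = -2xQ'Q f`, and `-(xQ')Q + QΛQ = (1/2)Q²`. -/
theorem key_mass_relation (Q S₁ T₂ : SchwartzMap ℝ ℂ)
    (hQreal : ∀ x, (Q x).im = 0) (hS₁real : ∀ x, (S₁ x).im = 0)
    (hT₂real : ∀ x, (T₂ x).im = 0)
    (hQ : ∀ x : ℝ, Dop (⇑Q) x + Q x = (Q x)^3)
    (hS₁ : ∀ x : ℝ, Dop (⇑S₁) x + S₁ x - (Q x)^2 * S₁ x = lam (⇑Q) x)
    (hT₂ : ∀ x : ℝ, Dop (⇑T₂) x + T₂ x - 3 * (Q x)^2 * T₂ x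
      = (1/2 : ℂ) * S₁ x - lam (⇑S₁) x + (S₁ x)^2 * Q x)
    (hLQ : ∀ x : ℝ, Dop (lam (⇑Q)) x + lam (⇑Q) x - 3 * (Q x)^2 * lam (⇑Q) x
      = -Q x)
    (hcomm : ∀ (f : SchwartzMap ℝ ℂ) (x : ℝ),
      Dop (lam (⇑f)) x - lam (Dop (⇑f)) x = Dop (⇑f) x)
    (hQcomm : ∀ (f : SchwartzMap ℝ ℂ) (x : ℝ),
      (Q x)^2 * lam (⇑f) x - lam (fun y => (Q y)^2 * f y) x
        = -(2 * (x : ℂ) * deriv (⇑Q) x * Q x) * f x)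
    (hpoint : ∀ x : ℝ, -((x : ℂ) * deriv (⇑Q) x) * Q x + Q x * lam (⇑Q) x
      = (1/2 : ℂ) * (Q x)^2) :
    (∫ x : ℝ, S₁ x * S₁ x) + 2 * ∫ x : ℝ, Q x * T₂ x = 0 := by
  classical
  set LQ : SchwartzMap ℝ ℂ := lamS Q with hLQdef
  set LS : SchwartzMap ℝ ℂ := lamS S₁ with hLSdef
  have hlq : lam (⇑Q) = ⇑LQ := funext fun x => (lamS_apply Q x).symm
  have hls : lam (⇑S₁) = ⇑LS := funext fun x => (lamS_apply S₁ x).symm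
  have hlqx : ∀ x, lam (⇑Q) x = LQ x := fun x => congrFun hlq x
  have hlsx : ∀ x, lam (⇑S₁) x = LS x := fun x => congrFun hls x
  rw [hlq] at hLQ hS₁
  rw [hls] at hT₂
  -- pointwise consequences
  have hcS : ∀ x : ℝ, Dop (⇑LS) x - lam (Dop (⇑S₁)) x = Dop (⇑S₁) x := by
    intro x
    have := hcomm S₁ x
    rwa [hls] at this
  set QQS : SchwartzMap ℝ ℂ := mulS (mulS Q Q) S₁ with hQQSdef
  have hQQS : ∀ x, QQS x = Q x * Q x * S₁ x := fun x => by simp [hQQSdef, mulS_apply]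
  have hDopS_fun : Dop (⇑S₁) = ⇑(LQ - S₁ + QQS) := by
    funext x
    simp only [SchwartzMap.add_apply, SchwartzMap.sub_apply, hQQS]
    linear_combination (hS₁ x)
  have hlamDopS : ∀ x, lam (Dop (⇑S₁)) x = lam (⇑LQ) x + lam (⇑QQS) x - lam (⇑S₁) x := by
    intro x
    rw [hDopS_fun]
    have hNfun : ⇑(LQ - S₁ + QQS) = fun y => LQ y - S₁ y + QQS y := by
      funext y; simp [SchwartzMap.add_apply, SchwartzMap.sub_apply]
    have hderiv : deriv (fun y => LQ y - S₁ y + QQS y) x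
        = deriv (⇑LQ) x - deriv (⇑S₁) x + deriv (⇑QQS) x := by
      rw [deriv_fun_add (LQ.differentiableAt.fun_sub S₁.differentiableAt) QQS.differentiableAt,
        deriv_fun_sub LQ.differentiableAt S₁.differentiableAt]
    simp only [lam, hNfun]
    rw [hderiv]
    ring
  have hlamQQS : ∀ x : ℝ, lam (⇑QQS) x
      = (Q x)^2 * lam (⇑S₁) x + 2 * (x : ℂ) * deriv (⇑Q) x * Q x * S₁ x := by
    intro x
    have h1 := hQcomm S₁ x
    have h2 : lam (fun y => (Q y)^2 * S₁ y) = lam (⇑QQS) := by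
      apply congrArg lam
      funext y
      rw [hQQS]; ring
    rw [h2] at h1
    linear_combination -h1
  have hDopLS : ∀ x : ℝ, Dop (⇑LS) x
      = lam (⇑LQ) x + Q x * Q x * LS x + 2 * (deriv (⇑Q) x * (x:ℂ) * Q x * S₁ x)
        - LS x + LQ x - S₁ x + Q x * Q x * S₁ x := by
    intro x
    have h1 := hcS x
    have h2 := hlamDopS x
    have h3 := hlamQQS x
    have h4 := hS₁ x
    rw [hlsx] at h3
    linear_combination h1 + h2 + h3 + h4 - hlsx x
  -- integrability of the two Dop-products we must split off
  have iDopLQ_T : Integrable (fun x => Dop (⇑LQ) x * T₂ x) := by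
    have := smul_int ((3:ℂ) • (mulS (mulS Q Q) LQ) - Q - LQ) T₂
    refine this.congr ?_
    filter_upwards with x
    simp only [SchwartzMap.sub_apply, SchwartzMap.smul_apply, mulS_apply, smul_eq_mul]
    linear_combination -(T₂ x) * (hLQ x)
  have iDopS_LS : Integrable (fun x => Dop (⇑S₁) x * LS x) := by
    have := smul_int (LQ - S₁ + QQS) LS
    refine this.congr ?_
    filter_upwards with x
    rw [hDopS_fun]
  have iG1 : Integrable (fun x => deriv (⇑Q) x * (x:ℂ) * Q x * S₁ x * S₁ x) := by
    have := smul_int (mulS (mulS (mulX (SchwartzMap.derivCLM ℝ ℂ Q)) Q) S₁) S₁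
    refine this.congr ?_
    filter_upwards with x
    simp only [mulS_apply, mulX_apply, SchwartzMap.derivCLM_apply]
  -- step: b in terms of J, P1, P2
  have hb : (∫ x : ℝ, Q x * T₂ x)
      = -(∫ x : ℝ, Dop (⇑LQ) x * T₂ x) + -(∫ x : ℝ, LQ x * T₂ x)
        + 3 * ∫ x : ℝ, Q x * Q x * LQ x * T₂ x := by
    have h : ∀ x : ℝ, Q x * T₂ x
        = -(Dop (⇑LQ) x * T₂ x) + -(LQ x * T₂ x) + 3 * (Q x * Q x * LQ x * T₂ x) := by
      intro x
      linear_combination (T₂ x) * (hLQ x)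
    rw [intcg h, int_add3 _ _ _
      (iDopLQ_T.neg : Integrable (fun x => -(Dop (⇑LQ) x * T₂ x)))
      ((smul_int LQ T₂).neg : Integrable (fun x => -(LQ x * T₂ x)))
      ((int4 Q Q LQ T₂).const_mul 3), integral_neg, integral_neg, integral_const_mul]
  -- step: J via self-adjointness and the T₂ equation
  have hJ : (∫ x : ℝ, Dop (⇑LQ) x * T₂ x)
      = (1/2 : ℂ) * (∫ x : ℝ, LQ x * S₁ x) + -(∫ x : ℝ, LQ x * LS x)
        + (∫ x : ℝ, LQ x * S₁ x * S₁ x * Q x) + -(∫ x : ℝ, LQ x * T₂ x)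
        + 3 * ∫ x : ℝ, Q x * Q x * LQ x * T₂ x := by
    rw [DselfS LQ T₂]
    have h : ∀ x : ℝ, LQ x * Dop (⇑T₂) x
        = (1/2 : ℂ) * (LQ x * S₁ x) + -(LQ x * LS x) + LQ x * S₁ x * S₁ x * Q x
          + -(LQ x * T₂ x) + 3 * (Q x * Q x * LQ x * T₂ x) := by
      intro x
      linear_combination (LQ x) * (hT₂ x)
    rw [intcg h, int_add5 _ _ _ _ _ ((smul_int LQ S₁).const_mul _)
      ((smul_int LQ LS).neg : Integrable (fun x => -(LQ x * LS x)))
      (int4 LQ S₁ S₁ Q)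
      ((smul_int LQ T₂).neg : Integrable (fun x => -(LQ x * T₂ x)))
      ((int4 Q Q LQ T₂).const_mul 3),
      integral_const_mul, integral_neg, integral_neg, integral_const_mul]
  -- step: E = K0 + H - K
  have hE3 : (∫ x : ℝ, LQ x * LS x)
      = (∫ x : ℝ, Dop (⇑S₁) x * LS x) + (∫ x : ℝ, S₁ x * LS x)
        + -(∫ x : ℝ, Q x * Q x * S₁ x * LS x) := by
    have h : ∀ x : ℝ, LQ x * LS x
        = Dop (⇑S₁) x * LS x + S₁ x * LS x + -(Q x * Q x * S₁ x * LS x) := by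
      intro x
      linear_combination -(LS x) * (hS₁ x)
    rw [intcg h, int_add3 _ _ _ iDopS_LS (smul_int S₁ LS)
      ((int4 Q Q S₁ LS).neg : Integrable (fun x => -(Q x * Q x * S₁ x * LS x))), integral_neg]
  -- step: K0 via self-adjointness and the commutator identities
  have hasym : (∫ x : ℝ, S₁ x * lam (⇑LQ) x) = -(∫ x : ℝ, LQ x * LS x) := by
    have h1 := lam_antisym S₁ LQ
    have h2 : (∫ x : ℝ, lam (⇑S₁) x * LQ x) = ∫ x : ℝ, LQ x * LS x := by
      apply intcg
      intro x
      rw [hlsx]; ring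
    rw [h2] at h1
    linear_combination h1
  have hK0 : (∫ x : ℝ, Dop (⇑S₁) x * LS x)
      = -(∫ x : ℝ, LQ x * LS x) + (∫ x : ℝ, Q x * Q x * S₁ x * LS x)
        + 2 * (∫ x : ℝ, deriv (⇑Q) x * (x:ℂ) * Q x * S₁ x * S₁ x)
        + -(∫ x : ℝ, S₁ x * LS x) + (∫ x : ℝ, LQ x * S₁ x)
        + -(∫ x : ℝ, S₁ x * S₁ x) + ∫ x : ℝ, Q x * Q x * S₁ x * S₁ x := by
    rw [DselfS S₁ LS]
    have h : ∀ x : ℝ, S₁ x * Dop (⇑LS) x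
        = S₁ x * lam (⇑LQ) x + Q x * Q x * S₁ x * LS x
          + 2 * (deriv (⇑Q) x * (x:ℂ) * Q x * S₁ x * S₁ x) + -(S₁ x * LS x)
          + LQ x * S₁ x + -(S₁ x * S₁ x) + Q x * Q x * S₁ x * S₁ x := by
      intro x
      rw [hDopLS x]
      ring
    have iSlamLQ : Integrable (fun x => S₁ x * lam (⇑LQ) x) := by
      have := smul_int S₁ (lamS LQ)
      exact this.congr (by filter_upwards with x; rw [lamS_apply])
    rw [intcg h, int_add7 _ _ _ _ _ _ _ iSlamLQ (int4 Q Q S₁ LS) (iG1.const_mul 2)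
      ((smul_int S₁ LS).neg : Integrable (fun x => -(S₁ x * LS x))) (smul_int LQ S₁)
      ((smul_int S₁ S₁).neg : Integrable (fun x => -(S₁ x * S₁ x))) (int4 Q Q S₁ S₁),
      hasym, integral_const_mul, integral_neg, integral_neg]
  -- step: M = B/2 + G
  have hMeq : (∫ x : ℝ, LQ x * S₁ x * S₁ x * Q x)
      = (1/2 : ℂ) * (∫ x : ℝ, Q x * Q x * S₁ x * S₁ x)
        + ∫ x : ℝ, deriv (⇑Q) x * (x:ℂ) * Q x * S₁ x * S₁ x := by
    have h : ∀ x : ℝ, LQ x * S₁ x * S₁ x * Q x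
        = (1/2 : ℂ) * (Q x * Q x * S₁ x * S₁ x)
          + deriv (⇑Q) x * (x:ℂ) * Q x * S₁ x * S₁ x := by
      intro x
      have := hpoint x
      rw [hlqx] at this
      linear_combination (S₁ x * S₁ x) * this
    rw [intcg h, integral_add ((int4 Q Q S₁ S₁).const_mul _) iG1, integral_const_mul]
  -- final assembly
  linear_combination 2 * hb - 2 * hJ + hE3 + hK0 - 2 * hMeq
end

section
/- Under the hypotheses of the previous relation (L₋S₁ = ΛQ, L₊T₂ = (1/2)S₁ − ΛS₁ + S₁²Q, L₊(ΛQ) = −Q, (S₁,S₁) = −2(Q,T₂)), the solvability condition for the third-order profile equation holds: −(Q, T₂) + (Q, ΛT₂) + 2(Q, Q T₂ S₁) + (Q, S₁³) = 0. -/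
open MeasureTheory ComplexConjugate

namespace ThirdOrderAux

open Filter Complex SchwartzMap Real Set Topology

/-- basic bound on a Schwartz function -/
lemma sbound (f : SchwartzMap ℝ ℂ) : ∃ C, ∀ x : ℝ, ‖f x‖ ≤ C := by
  obtain ⟨C, -, hC⟩ := f.decay 0 0
  exact ⟨C, fun x => by simpa [norm_iteratedFDeriv_zero] using hC x⟩

/-- weighted bound -/
lemma xbound (f : SchwartzMap ℝ ℂ) : ∃ C, ∀ x : ℝ, |x| * ‖f x‖ ≤ C := by
  obtain ⟨C, -, hC⟩ := f.decay 1 0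
  exact ⟨C, fun x => by simpa [norm_iteratedFDeriv_zero] using hC x⟩

lemma lam_bound (f : SchwartzMap ℝ ℂ) : ∃ C, ∀ x : ℝ, ‖lam (⇑f) x‖ ≤ C := by
  obtain ⟨C₀, hC₀⟩ := sbound f
  obtain ⟨C₁, hC₁⟩ := xbound (derivCLM ℝ ℂ f)
  refine ⟨(1/2) * C₀ + C₁, fun x => ?_⟩
  have h1 : ‖(1/2 : ℂ) * f x‖ ≤ (1/2) * C₀ := by
    rw [norm_mul]
    have : ‖(1/2 : ℂ)‖ = 1/2 := by norm_num
    rw [this]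
    have := hC₀ x
    nlinarith [norm_nonneg (f x)]
  have h2 : ‖(x : ℂ) * deriv (⇑f) x‖ ≤ C₁ := by
    rw [norm_mul, Complex.norm_real, Real.norm_eq_abs]
    simpa [SchwartzMap.derivCLM_apply] using hC₁ x
  calc ‖lam (⇑f) x‖ ≤ ‖(1/2 : ℂ) * f x‖ + ‖(x : ℂ) * deriv (⇑f) x‖ := norm_add_le _ _
    _ ≤ (1/2) * C₀ + C₁ := add_le_add h1 h2

lemma lam_continuous (f : SchwartzMap ℝ ℂ) : Continuous (lam (⇑f)) := by
  have hd : Continuous (deriv (⇑f)) := by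
    have : deriv (⇑f) = ⇑(derivCLM ℝ ℂ f) := by
      funext x; rw [SchwartzMap.derivCLM_apply]
    rw [this]; exact (derivCLM ℝ ℂ f).continuous
  exact ((continuous_const.mul f.continuous).add
    (Complex.continuous_ofReal.mul hd))

/-- integrability of bounded-continuous times integrable -/
lemma int_bdd_mul {φ : ℝ → ℂ} {g : ℝ → ℂ} (hφc : Continuous φ)
    (hφb : ∃ C, ∀ x, ‖φ x‖ ≤ C) (hg : Integrable g) :
    Integrable (fun x => φ x * g x) :=
  by obtain ⟨C, hC⟩ := hφb; exact hg.bdd_mul hφc.aestronglyMeasurable (ae_of_all _ hC)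

lemma int_mul (f g : SchwartzMap ℝ ℂ) : Integrable (fun x : ℝ => f x * g x) :=
  int_bdd_mul f.continuous (sbound f) g.integrable

lemma int_lam_mul (f g : SchwartzMap ℝ ℂ) :
    Integrable (fun x : ℝ => lam (⇑f) x * g x) :=
  int_bdd_mul (lam_continuous f) (lam_bound f) g.integrable

lemma int_mul_lam (f g : SchwartzMap ℝ ℂ) :
    Integrable (fun x : ℝ => f x * lam (⇑g) x) :=
  (int_lam_mul g f).congr (ae_of_all _ fun x => mul_comm _ _)

lemma int_sq_mul (Q f g : SchwartzMap ℝ ℂ) :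
    Integrable (fun x : ℝ => (Q x)^2 * (f x * g x)) := by
  obtain ⟨C, hC⟩ := sbound Q
  have hC0 : 0 ≤ C := (norm_nonneg (Q 0)).trans (hC 0)
  refine int_bdd_mul (Q.continuous.pow 2) ⟨C^2, fun x => ?_⟩ (int_mul f g)
  rw [norm_pow]
  exact pow_le_pow_left₀ (norm_nonneg _) (hC x) 2

lemma int_cube_mul (f g : SchwartzMap ℝ ℂ) :
    Integrable (fun x : ℝ => (f x)^3 * g x) := by
  obtain ⟨C, hC⟩ := sbound f
  have hC0 : 0 ≤ C := (norm_nonneg (f 0)).trans (hC 0)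
  refine int_bdd_mul (f.continuous.pow 3) ⟨C^3, fun x => ?_⟩ g.integrable
  rw [norm_pow]
  exact pow_le_pow_left₀ (norm_nonneg _) (hC x) 3

/-- the Schwartz function tends to zero at ±∞ -/
lemma tendsto_zero_atTop (f : SchwartzMap ℝ ℂ) : Tendsto (⇑f) atTop (𝓝 0) :=
  (zero_at_infty f).mono_left _root_.atTop_le_cocompact

lemma tendsto_zero_atBot (f : SchwartzMap ℝ ℂ) : Tendsto (⇑f) atBot (𝓝 0) :=
  (zero_at_infty f).mono_left _root_.atBot_le_cocompact

/-- skew-adjointness of Λ -/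
lemma lam_skew (f g : SchwartzMap ℝ ℂ) :
    (∫ x : ℝ, f x * lam (⇑g) x) = -∫ x : ℝ, lam (⇑f) x * g x := by
  set h : ℝ → ℂ := fun x => (x : ℂ) * (f x * g x) with hh
  set h' : ℝ → ℂ := fun x => lam (⇑f) x * g x + f x * lam (⇑g) x with hh'
  have hderiv : ∀ x : ℝ, HasDerivAt h (h' x) x := by
    intro x
    have hx : HasDerivAt (fun y : ℝ => (y : ℂ)) 1 x := by
      simpa using (hasDerivAt_id x).ofReal_comp
    have hf : HasDerivAt (⇑f) (deriv (⇑f) x) x := (f.differentiable x).hasDerivAt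
    have hg : HasDerivAt (⇑g) (deriv (⇑g) x) x := (g.differentiable x).hasDerivAt
    have := hx.mul (hf.mul hg)
    have e : h' x = 1 * (⇑f * ⇑g) x + ↑x * (deriv (⇑f) x * g x + f x * deriv (⇑g) x) := by
      simp only [hh', lam, Pi.mul_apply]
      ring
    rw [e]; exact this
  have hint : Integrable h' :=
    (int_lam_mul f g).add (int_mul_lam f g)
  have htop : Tendsto h atTop (𝓝 0) := by
    obtain ⟨C, hC⟩ := xbound f
    have hb : ∀ x : ℝ, ‖h x‖ ≤ C * ‖g x‖ := by
      intro x
      have : ‖h x‖ = (|x| * ‖f x‖) * ‖g x‖ := by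
        simp [hh, norm_mul, Real.norm_eq_abs, Complex.norm_real]; ring
      rw [this]
      exact mul_le_mul_of_nonneg_right (hC x) (norm_nonneg _)
    have hgz : Tendsto (fun x : ℝ => C * ‖g x‖) atTop (𝓝 0) := by
      have := (tendsto_zero_atTop g).norm
      simpa using this.const_mul C
    exact squeeze_zero_norm hb hgz
  have hbot : Tendsto h atBot (𝓝 0) := by
    obtain ⟨C, hC⟩ := xbound f
    have hb : ∀ x : ℝ, ‖h x‖ ≤ C * ‖g x‖ := by
      intro x
      have : ‖h x‖ = (|x| * ‖f x‖) * ‖g x‖ := by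
        simp [hh, norm_mul, Real.norm_eq_abs, Complex.norm_real]; ring
      rw [this]
      exact mul_le_mul_of_nonneg_right (hC x) (norm_nonneg _)
    have hgz : Tendsto (fun x : ℝ => C * ‖g x‖) atBot (𝓝 0) := by
      have := (tendsto_zero_atBot g).norm
      simpa using this.const_mul C
    exact squeeze_zero_norm hb hgz
  have hIic : ∫ x in Iic (0:ℝ), h' x = h 0 - 0 :=
    integral_Iic_of_hasDerivAt_of_tendsto' (fun x _ => hderiv x) hint.integrableOn hbot
  have hIoi : ∫ x in Ioi (0:ℝ), h' x = 0 - h 0 :=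
    integral_Ioi_of_hasDerivAt_of_tendsto' (fun x _ => hderiv x) hint.integrableOn htop
  have hsplit : (∫ x : ℝ, h' x) = 0 := by
    rw [← intervalIntegral.integral_Iic_add_Ioi hint.integrableOn hint.integrableOn, hIic, hIoi]
    ring
  have hadd : (∫ x : ℝ, h' x)
      = (∫ x : ℝ, lam (⇑f) x * g x) + ∫ x : ℝ, f x * lam (⇑g) x := by
    simp only [hh']
    exact integral_add (int_lam_mul f g) (int_mul_lam f g)
  rw [hadd] at hsplit
  linear_combination hsplit

end ThirdOrderAux

namespace ThirdOrderAux2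

open Filter Complex SchwartzMap Real Set Topology ThirdOrderAux
open scoped FourierTransform

/-- inner Fourier-type integral -/
noncomputable def Ff (u : ℝ → ℂ) (ξ : ℝ) : ℂ :=
  ∫ y : ℝ, Complex.exp (-Complex.I * (ξ : ℂ) * (y : ℂ)) * u y

lemma Ff_eq (f : SchwartzMap ℝ ℂ) (ξ : ℝ) : Ff (⇑f) ξ = 𝓕 (⇑f) (ξ / (2 * π)) := by
  rw [Real.fourier_real_eq_integral_exp_smul]
  unfold Ff
  congr 1
  funext v
  rw [smul_eq_mul]
  congr 2
  have hπ : (2 * π) ≠ 0 := by positivity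
  have : (-2 * π * v * (ξ / (2 * π))) = -(ξ * v) := by field_simp
  rw [this]
  push_cast
  ring

lemma Ff_eq' (f : SchwartzMap ℝ ℂ) (ξ : ℝ) :
    Ff (⇑f) ξ = (fourierTransformCLM ℂ f) (ξ * (2 * π)⁻¹) := by
  rw [Ff_eq, fourierTransformCLM_apply, div_eq_mul_inv, SchwartzMap.fourier_coe]

lemma Ff_continuous (f : SchwartzMap ℝ ℂ) : Continuous (Ff (⇑f)) := by
  have : Ff (⇑f) = fun ξ => (fourierTransformCLM ℂ f) (ξ * (2 * π)⁻¹) :=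
    funext fun ξ => Ff_eq' f ξ
  rw [this]
  exact (SchwartzMap.continuous _).comp (continuous_id.mul continuous_const)

lemma int_phi (f : SchwartzMap ℝ ℂ) :
    Integrable (fun ξ : ℝ => ((|ξ| : ℝ) : ℂ) * Ff (⇑f) ξ) := by
  set g₁ := fourierTransformCLM ℂ f with hg₁
  have hπ : (0:ℝ) < 2 * π := by positivity
  have h1 : Integrable (fun ξ : ℝ => ‖ξ‖ ^ 1 * ‖g₁ ξ‖) := g₁.integrable_pow_mul volume 1
  have h2 : Integrable (fun ξ : ℝ => ‖ξ * (2 * π)⁻¹‖ ^ 1 * ‖g₁ (ξ * (2 * π)⁻¹)‖) :=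
    h1.comp_mul_right' (inv_ne_zero hπ.ne')
  have h3 : Integrable (fun ξ : ℝ =>
      (2 * π) * (‖ξ * (2 * π)⁻¹‖ ^ 1 * ‖g₁ (ξ * (2 * π)⁻¹)‖)) := h2.const_mul _
  refine h3.mono' ?_ (ae_of_all _ fun ξ => ?_)
  · exact ((Complex.continuous_ofReal.comp _root_.continuous_abs).mul
      (Ff_continuous f)).aestronglyMeasurable
  · rw [norm_mul, Ff_eq' f ξ, Complex.norm_real, Real.norm_eq_abs, _root_.abs_abs]
    have hn : ‖ξ * (2 * π)⁻¹‖ ^ 1 = |ξ| * (2 * π)⁻¹ := by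
      rw [pow_one, Real.norm_eq_abs, abs_mul, abs_inv, abs_of_pos hπ]
    rw [hn, ← hg₁]
    apply le_of_eq
    have h5 : 2 * π * (|ξ| * (2 * π)⁻¹ * ‖g₁ (ξ * (2 * π)⁻¹)‖)
        = (2 * π * (2 * π)⁻¹) * (|ξ| * ‖g₁ (ξ * (2 * π)⁻¹)‖) := by ring
    rw [h5, mul_inv_cancel₀ hπ.ne', one_mul]

lemma norm_exp_I_mul (ξ x : ℝ) : ‖Complex.exp (Complex.I * (ξ:ℂ) * (x:ℂ))‖ = 1 := by
  rw [Complex.norm_exp]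
  simp [Complex.mul_re]

lemma Ff_neg (g : SchwartzMap ℝ ℂ) (ξ : ℝ) :
    (∫ x : ℝ, Complex.exp (Complex.I * (ξ:ℂ) * (x:ℂ)) * g x) = Ff (⇑g) (-ξ) := by
  unfold Ff
  congr 1
  funext y
  congr 2
  push_cast
  ring

lemma pairing (f g : SchwartzMap ℝ ℂ) :
    (∫ x : ℝ, Dop (⇑f) x * g x)
      = (1 / (2 * (π : ℂ))) * ∫ ξ : ℝ, ((|ξ| : ℝ) : ℂ) * Ff (⇑f) ξ * Ff (⇑g) (-ξ) := by
  set c : ℂ := 1 / (2 * (π : ℂ)) with hc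
  have e1 : ∀ x : ℝ, Dop (⇑f) x * g x
      = c * ∫ ξ : ℝ, ((|ξ| : ℝ) : ℂ) * Ff (⇑f) ξ
          * Complex.exp (Complex.I * (ξ:ℂ) * (x:ℂ)) * g x := by
    intro x
    have hD : Dop (⇑f) x = c * ∫ ξ : ℝ, ((|ξ| : ℝ) : ℂ) * Ff (⇑f) ξ
        * Complex.exp (Complex.I * (ξ:ℂ) * (x:ℂ)) := rfl
    rw [hD, mul_assoc]
    congr 1
    rw [← integral_mul_const]
  have hint2 : Integrable (fun z : ℝ × ℝ => ((|z.2| : ℝ) : ℂ) * Ff (⇑f) z.2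
      * Complex.exp (Complex.I * (z.2:ℂ) * (z.1:ℂ)) * g z.1) := by
    have hbase : Integrable (fun z : ℝ × ℝ =>
        g z.1 * (((|z.2| : ℝ) : ℂ) * Ff (⇑f) z.2)) :=
      g.integrable.mul_prod (int_phi f)
    have c1 : Continuous (fun z : ℝ × ℝ => ((|z.2| : ℝ) : ℂ)) :=
      Complex.continuous_ofReal.comp (_root_.continuous_abs.comp continuous_snd)
    have c2 : Continuous (fun z : ℝ × ℝ => Ff (⇑f) z.2) :=
      (Ff_continuous f).comp continuous_snd
    have c3 : Continuous (fun z : ℝ × ℝ =>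
        Complex.exp (Complex.I * (z.2:ℂ) * (z.1:ℂ))) :=
      Complex.continuous_exp.comp
        ((continuous_const.mul (Complex.continuous_ofReal.comp continuous_snd)).mul
          (Complex.continuous_ofReal.comp continuous_fst))
    have c4 : Continuous (fun z : ℝ × ℝ => g z.1) := g.continuous.comp continuous_fst
    refine hbase.norm.mono' (((c1.mul c2).mul c3).mul c4).aestronglyMeasurable
      (ae_of_all _ fun z => ?_)
    have heq : ‖((|z.2| : ℝ) : ℂ) * Ff (⇑f) z.2
        * Complex.exp (Complex.I * (z.2:ℂ) * (z.1:ℂ)) * g z.1‖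
        = ‖g z.1 * (((|z.2| : ℝ) : ℂ) * Ff (⇑f) z.2)‖ := by
      simp only [norm_mul, norm_exp_I_mul, mul_one]
      ring
    exact le_of_eq heq
  calc (∫ x : ℝ, Dop (⇑f) x * g x)
      = ∫ x : ℝ, c * ∫ ξ : ℝ, ((|ξ| : ℝ) : ℂ) * Ff (⇑f) ξ
          * Complex.exp (Complex.I * (ξ:ℂ) * (x:ℂ)) * g x := by
        exact integral_congr_ae (ae_of_all _ e1)
    _ = c * ∫ x : ℝ, ∫ ξ : ℝ, ((|ξ| : ℝ) : ℂ) * Ff (⇑f) ξ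
          * Complex.exp (Complex.I * (ξ:ℂ) * (x:ℂ)) * g x := integral_const_mul _ _
    _ = c * ∫ ξ : ℝ, ∫ x : ℝ, ((|ξ| : ℝ) : ℂ) * Ff (⇑f) ξ
          * Complex.exp (Complex.I * (ξ:ℂ) * (x:ℂ)) * g x := by
        rw [integral_integral_swap hint2]
    _ = c * ∫ ξ : ℝ, ((|ξ| : ℝ) : ℂ) * Ff (⇑f) ξ * Ff (⇑g) (-ξ) := by
        congr 1
        apply integral_congr_ae (ae_of_all _ fun ξ => ?_)
        have : ∀ x : ℝ, ((|ξ| : ℝ) : ℂ) * Ff (⇑f) ξ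
            * Complex.exp (Complex.I * (ξ:ℂ) * (x:ℂ)) * g x
            = (((|ξ| : ℝ) : ℂ) * Ff (⇑f) ξ)
              * (Complex.exp (Complex.I * (ξ:ℂ) * (x:ℂ)) * g x) := fun x => by ring
        rw [integral_congr_ae (ae_of_all _ this), integral_const_mul, Ff_neg, mul_assoc]

lemma Dsym (f g : SchwartzMap ℝ ℂ) :
    (∫ x : ℝ, Dop (⇑f) x * g x) = ∫ x : ℝ, f x * Dop (⇑g) x := by
  have h2 : (∫ x : ℝ, f x * Dop (⇑g) x) = ∫ x : ℝ, Dop (⇑g) x * f x :=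
    integral_congr_ae (ae_of_all _ fun x => mul_comm _ _)
  rw [pairing f g, h2, pairing g f]
  congr 1
  have hneg := MeasureTheory.integral_neg_eq_self
    (fun η : ℝ => ((|η| : ℝ) : ℂ) * Ff (⇑g) η * Ff (⇑f) (-η)) volume
  rw [← hneg]
  apply integral_congr_ae (ae_of_all _ fun ξ => ?_)
  simp only [abs_neg, neg_neg]
  ring

end ThirdOrderAux2

open ThirdOrderAux ThirdOrderAux2 in
/-- Solvability condition for the third-order profile equation:
under `L₋S₁ = ΛQ`, `L₊T₂ = (1/2)S₁ - ΛS₁ + S₁²Q`, `L₊(ΛQ) = -Q`, and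
`(S₁,S₁) = -2(Q,T₂)`, one has
`-(Q,T₂) + (Q,ΛT₂) + 2(Q, Q T₂ S₁) + (Q, S₁³) = 0`. -/
theorem third_order_solvability (Q S₁ T₂ : SchwartzMap ℝ ℂ)
    (hQreal : ∀ x, (Q x).im = 0) (hS₁real : ∀ x, (S₁ x).im = 0)
    (hT₂real : ∀ x, (T₂ x).im = 0)
    (hQ : ∀ x : ℝ, Dop (⇑Q) x + Q x = (Q x)^3)
    (hS₁ : ∀ x : ℝ, Dop (⇑S₁) x + S₁ x - (Q x)^2 * S₁ x = lam (⇑Q) x)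
    (hT₂ : ∀ x : ℝ, Dop (⇑T₂) x + T₂ x - 3 * (Q x)^2 * T₂ x
      = (1/2 : ℂ) * S₁ x - lam (⇑S₁) x + (S₁ x)^2 * Q x)
    (hLQ : ∀ x : ℝ, Dop (lam (⇑Q)) x + lam (⇑Q) x - 3 * (Q x)^2 * lam (⇑Q) x
      = -Q x)
    (hrel : (∫ x : ℝ, S₁ x * S₁ x) = -2 * ∫ x : ℝ, Q x * T₂ x) :
    -(∫ x : ℝ, Q x * T₂ x) + (∫ x : ℝ, Q x * lam (⇑T₂) x)
      + 2 * (∫ x : ℝ, Q x * (Q x * T₂ x * S₁ x))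
      + (∫ x : ℝ, Q x * (S₁ x)^3) = 0 := by
  have iA : Integrable (fun x : ℝ => lam (⇑Q) x * T₂ x) := int_lam_mul Q T₂
  have iB : Integrable (fun x : ℝ => S₁ x * T₂ x) := int_mul S₁ T₂
  have iC : Integrable (fun x : ℝ => (Q x)^2 * (S₁ x * T₂ x)) := int_sq_mul Q S₁ T₂
  have iD : Integrable (fun x : ℝ => S₁ x * S₁ x) := int_mul S₁ S₁
  have iE : Integrable (fun x : ℝ => S₁ x * lam (⇑S₁) x) := int_mul_lam S₁ S₁
  have iF : Integrable (fun x : ℝ => (S₁ x)^3 * Q x) := int_cube_mul S₁ Q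
  have e1 : ∀ x : ℝ, Dop (⇑S₁) x * T₂ x
      = (lam (⇑Q) x * T₂ x - S₁ x * T₂ x) + (Q x)^2 * (S₁ x * T₂ x) := by
    intro x; linear_combination T₂ x * (hS₁ x)
  have E1 : (∫ x : ℝ, Dop (⇑S₁) x * T₂ x)
      = ((∫ x : ℝ, lam (⇑Q) x * T₂ x) - ∫ x : ℝ, S₁ x * T₂ x)
        + ∫ x : ℝ, (Q x)^2 * (S₁ x * T₂ x) := by
    have iAB : Integrable (fun x : ℝ => lam (⇑Q) x * T₂ x - S₁ x * T₂ x) := iA.sub iB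
    rw [MeasureTheory.integral_congr_ae (Filter.Eventually.of_forall e1),
      MeasureTheory.integral_add iAB iC, MeasureTheory.integral_sub iA iB]
  have e2 : ∀ x : ℝ, S₁ x * Dop (⇑T₂) x
      = ((((1/2 : ℂ) * (S₁ x * S₁ x) - S₁ x * lam (⇑S₁) x) + (S₁ x)^3 * Q x)
          - S₁ x * T₂ x) + 3 * ((Q x)^2 * (S₁ x * T₂ x)) := by
    intro x; linear_combination S₁ x * (hT₂ x)
  have E2 : (∫ x : ℝ, S₁ x * Dop (⇑T₂) x)
      = ((((1/2 : ℂ) * (∫ x : ℝ, S₁ x * S₁ x) - ∫ x : ℝ, S₁ x * lam (⇑S₁) x)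
            + ∫ x : ℝ, (S₁ x)^3 * Q x)
          - ∫ x : ℝ, S₁ x * T₂ x) + 3 * ∫ x : ℝ, (Q x)^2 * (S₁ x * T₂ x) := by
    have i1 : Integrable (fun x : ℝ => (1/2 : ℂ) * (S₁ x * S₁ x)) := iD.const_mul _
    have i2 : Integrable (fun x : ℝ =>
        (1/2 : ℂ) * (S₁ x * S₁ x) - S₁ x * lam (⇑S₁) x) := i1.sub iE
    have i3 : Integrable (fun x : ℝ =>
        ((1/2 : ℂ) * (S₁ x * S₁ x) - S₁ x * lam (⇑S₁) x) + (S₁ x)^3 * Q x) := i2.add iF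
    have i4 : Integrable (fun x : ℝ =>
        (((1/2 : ℂ) * (S₁ x * S₁ x) - S₁ x * lam (⇑S₁) x) + (S₁ x)^3 * Q x)
          - S₁ x * T₂ x) := i3.sub iB
    have i5 : Integrable (fun x : ℝ => 3 * ((Q x)^2 * (S₁ x * T₂ x))) := iC.const_mul 3
    rw [MeasureTheory.integral_congr_ae (Filter.Eventually.of_forall e2),
      MeasureTheory.integral_add i4 i5,
      MeasureTheory.integral_sub i3 iB,
      MeasureTheory.integral_add i2 iF,
      MeasureTheory.integral_sub i1 iE,
      MeasureTheory.integral_const_mul, MeasureTheory.integral_const_mul]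
  have hskewQT : (∫ x : ℝ, Q x * lam (⇑T₂) x) = -∫ x : ℝ, lam (⇑Q) x * T₂ x :=
    lam_skew Q T₂
  have hskewS : (∫ x : ℝ, S₁ x * lam (⇑S₁) x) = 0 := by
    have h := lam_skew S₁ S₁
    have h2 : (∫ x : ℝ, lam (⇑S₁) x * S₁ x) = ∫ x : ℝ, S₁ x * lam (⇑S₁) x :=
      MeasureTheory.integral_congr_ae (Filter.Eventually.of_forall fun x => mul_comm _ _)
    rw [h2] at h
    linear_combination (1/2 : ℂ) * h
  have hD := Dsym S₁ T₂
  rw [E1, E2] at hD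
  have g1 : (∫ x : ℝ, Q x * (Q x * T₂ x * S₁ x)) = ∫ x : ℝ, (Q x)^2 * (S₁ x * T₂ x) :=
    MeasureTheory.integral_congr_ae (Filter.Eventually.of_forall fun x => by ring)
  have g2 : (∫ x : ℝ, Q x * (S₁ x)^3) = ∫ x : ℝ, (S₁ x)^3 * Q x :=
    MeasureTheory.integral_congr_ae (Filter.Eventually.of_forall fun x => by ring)
  rw [g1, g2, hskewQT]
  linear_combination -hD - (1/2 : ℂ) * hrel + hskewS
end
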